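/- Let T ∈ (0, π/2) and α ∈ ℝ. If T < α < tan T, then the equation α·x = tan(T·x) has exactly one solution x in the open interval (0,1). If α ≤ T or α ≥ tan T, then the equation α·x = tan(T·x) has no solutions x in (0,1). -/

import Mathlib

open Real

lemma tan_strictConvexOn : StrictConvexOn ℝ (Set.Ico 0 (Real.pi/2)) Real.tan := by
  have hsub : Set.Ico (0:ℝ) (Real.pi/2) ⊆ {x | Real.cos x ≠ 0} := by
    intro x hx
    obtain ⟨hx1, hx2⟩ := hx
    exact (Real.cos_pos_of_mem_Ioo ⟨by linarith [Real.pi_pos], hx2⟩).ne'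
  apply strictConvexOn_of_deriv2_pos (convex_Ico _ _)
  · intro x hx
    exact (Real.continuousAt_tan.2 (hsub hx)).continuousWithinAt
  · intro x hx
    rw [interior_Ico] at hx
    obtain ⟨hx1, hx2⟩ := hx
    have hc : Real.cos x > 0 := Real.cos_pos_of_mem_Ioo ⟨by linarith [Real.pi_pos], hx2⟩
    have hs : Real.sin x > 0 := Real.sin_pos_of_pos_of_lt_pi hx1
      (by linarith [Real.pi_pos])
    have h1 : deriv Real.tan = fun y => 1 / Real.cos y ^ 2 := funext fun y => Real.deriv_tan y
    have h2 : HasDerivAt (fun y => 1 / Real.cos y ^ 2)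
        (2 * Real.sin x / Real.cos x ^ 3) x := by
      have hu : HasDerivAt (fun y => Real.cos y ^ 2)
          (2 * Real.cos x * (-Real.sin x)) x := by
        simpa [Pi.pow_def] using (Real.hasDerivAt_cos x).pow 2
      have hthis := hu.fun_inv (by positivity)
      have heq : -(2 * Real.cos x * (-Real.sin x)) / (Real.cos x ^ 2) ^ 2
          = 2 * Real.sin x / Real.cos x ^ 3 := by
        rw [div_eq_div_iff (by positivity) (by positivity)]
        ring
      rw [heq] at hthis
      simpa [one_div] using hthis
    have : deriv^[2] Real.tan x = 2 * Real.sin x / Real.cos x ^ 3 := by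
      simp only [Function.iterate_succ, Function.iterate_zero, Function.comp_apply, id_eq]
      rw [h1]
      exact h2.deriv
    rw [this]
    positivity

lemma tan_slope_lt (a b : ℝ) (ha : 0 < a) (hab : a < b) (hb : b < Real.pi/2) :
    Real.tan a / a < Real.tan b / b := by
  have := tan_strictConvexOn.secant_strict_mono (a := 0) (x := a) (y := b)
    (by constructor <;> [rfl; linarith [Real.pi_pos]])
    ⟨ha.le, by linarith⟩ ⟨by linarith, hb⟩ ha.ne' (by linarith) hab
  simpa [Real.tan_zero] using this

theorem tan_line_intersection (T α : ℝ) (hT0 : 0 < T) (hT : T < Real.pi / 2) :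
    (T < α → α < Real.tan T →
      ∃! x, x ∈ Set.Ioo (0:ℝ) 1 ∧ α * x = Real.tan (T * x)) ∧
    (α ≤ T ∨ Real.tan T ≤ α →
      ∀ x ∈ Set.Ioo (0:ℝ) 1, α * x ≠ Real.tan (T * x)) := by
  -- key monotonicity: for 0 < x < y ≤ 1, tan(Tx)/x < tan(Ty)/y
  have key : ∀ x y : ℝ, 0 < x → x < y → y ≤ 1 →
      Real.tan (T*x) / x < Real.tan (T*y) / y := by
    intro x y hx hxy hy1
    have h := tan_slope_lt (T*x) (T*y) (mul_pos hT0 hx)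
      (by nlinarith) (by nlinarith)
    have hTx : (0:ℝ) < T * x := mul_pos hT0 hx
    have hTy : (0:ℝ) < T * y := mul_pos hT0 (lt_trans hx hxy)
    rw [div_lt_div_iff₀ hTx hTy] at h
    rw [div_lt_div_iff₀ hx (by linarith)]
    nlinarith
  constructor
  · intro h1 h2
    -- existence: find x₀ with tan(T x₀) < α x₀
    have hderiv : HasDerivAt (fun x : ℝ => Real.tan (T * x)) T 0 := by
      have h0 : HasDerivAt Real.tan 1 (T * (0:ℝ)) := by
        simpa using Real.hasDerivAt_tan (x := (0:ℝ)) (by simp)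
      have := h0.comp 0 ((hasDerivAt_id (0:ℝ)).const_mul T)
      simpa [mul_comm, Function.comp_def] using this
    have hslope := hasDerivAt_iff_tendsto_slope.1 hderiv
    have hslope' : Filter.Tendsto (slope (fun x : ℝ => Real.tan (T*x)) 0)
        (nhdsWithin 0 (Set.Ioi 0)) (nhds T) :=
      hslope.mono_left (nhdsWithin_mono _ fun z hz => ne_of_gt hz)
    have hev : ∀ᶠ x in nhdsWithin (0:ℝ) (Set.Ioi 0),
        slope (fun x : ℝ => Real.tan (T*x)) 0 x < α :=
      hslope'.eventually_lt_const h1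
    have hev2 : ∀ᶠ x in nhdsWithin (0:ℝ) (Set.Ioi 0), x < 1 ∧ 0 < x := by
      filter_upwards [eventually_nhdsWithin_of_eventually_nhds
        (Filter.Tendsto.eventually_lt_const one_pos Filter.tendsto_id),
        self_mem_nhdsWithin] with x hx hx'
      exact ⟨hx, hx'⟩
    obtain ⟨x₀, hx₀s, hx₀1, hx₀0⟩ := (hev.and hev2).exists
    have hx₀lt : Real.tan (T * x₀) < α * x₀ := by
      have : (Real.tan (T * x₀) - Real.tan (T * 0)) / (x₀ - 0) < α := by
        simpa [slope_def_field, div_eq_iff] using hx₀s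
      simp only [mul_zero, Real.tan_zero, sub_zero] at this
      calc Real.tan (T * x₀) = (Real.tan (T * x₀) / x₀) * x₀ := by
            field_simp
        _ < α * x₀ := by
            apply mul_lt_mul_of_pos_right _ hx₀0
            rwa [div_lt_iff₀ hx₀0, ← sub_zero (Real.tan (T*x₀)), ← div_lt_iff₀ hx₀0,
              sub_zero] at this
    -- continuity of F on [x₀, 1]
    have hcont : ContinuousOn (fun x => Real.tan (T * x) - α * x) (Set.Icc x₀ 1) := by
      apply ContinuousOn.sub _ ((continuous_const.mul continuous_id).continuousOn)
      intro x hx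
      obtain ⟨hxl, hxr⟩ := hx
      have hcos : Real.cos (T * x) ≠ 0 := by
        apply ne_of_gt
        apply Real.cos_pos_of_mem_Ioo
        constructor
        · nlinarith [Real.pi_pos]
        · nlinarith
      exact ((Real.continuousAt_tan.2 hcos).comp
        ((continuous_const.mul continuous_id).continuousAt)).continuousWithinAt
    have hF1 : (0:ℝ) < Real.tan (T * 1) - α * 1 := by
      simp only [mul_one]; linarith
    have hF0 : Real.tan (T * x₀) - α * x₀ < 0 := by linarith
    have := intermediate_value_Ioo (le_of_lt hx₀1) hcont
      (Set.mem_Ioo.2 ⟨hF0, hF1⟩ : (0:ℝ) ∈ Set.Ioo _ _)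
    obtain ⟨c, hc, hFc⟩ := this
    refine ⟨c, ⟨⟨lt_trans hx₀0 hc.1, hc.2⟩, by linarith [sub_eq_zero.1 hFc]⟩, ?_⟩
    · rintro y ⟨⟨hy0, hy1⟩, hy⟩
      by_contra hne
      have hc0 : 0 < c := lt_trans hx₀0 hc.1
      have hceq : α * c = Real.tan (T * c) := by linarith [sub_eq_zero.1 hFc]
      rcases lt_or_gt_of_ne hne with hlt | hlt
      · have := key y c hy0 hlt hc.2.le
        rw [← hy, ← hceq, mul_div_assoc, mul_div_assoc,
          div_self hy0.ne', div_self hc0.ne'] at this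
        simp at this
      · have := key c y hc0 hlt hy1.le
        rw [← hy, ← hceq, mul_div_assoc, mul_div_assoc,
          div_self hy0.ne', div_self hc0.ne'] at this
        simp at this
  · rintro (hle | hge) x ⟨hx0, hx1⟩ heq
    · -- α ≤ T : tan(Tx) > Tx ≥ αx
      have h1 : T * x < Real.tan (T * x) := Real.lt_tan (by positivity) (by nlinarith)
      nlinarith
    · -- tan T ≤ α : tan(Tx)/x < tan T / 1 ≤ α
      have h := key x 1 hx0 hx1 le_rfl
      rw [mul_one, div_one] at h
      rw [← heq, mul_div_assoc, div_self hx0.ne'] at h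
      simp at h
      linarith
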